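/- Let d ≥ 3, 2 ≤ d' ≤ d, and γ(θ; v) = Σ_{j=1}^{d'-2} v_j θ^j/j! + θ^{d'}/d'! ⋅ (1 + v_{d'-1}) + Σ_{j=d'+1}^{d} (σ_j + v_{j-1}) θ^j/j!, where σ_j are fixed real numbers. Then γ satisfies the (d−1)-parameter cinematic curvature condition at the origin: det[∂T/∂θ, ∂T/∂v₁, …, ∂T/∂v_{d-1}]|_{θ=0, v=0} ≠ 0, where T(θ; v) = (∂_θ γ, …, ∂_θ^d γ)ᵀ. -/

import Mathlib

lemma itd_pow (k : ℕ) : ∀ n : ℕ, iteratedDeriv n (fun x : ℝ => x ^ k)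
    = fun x => (k.descFactorial n : ℝ) * x ^ (k - n) := by
  intro n
  induction n with
  | zero => simp
  | succ n ih =>
    rw [iteratedDeriv_succ, ih]
    funext x
    rw [deriv_const_mul_field, deriv_pow_field]
    have h1 : k.descFactorial (n+1) = (k - n) * k.descFactorial n := Nat.descFactorial_succ k n
    have h2 : k - n - 1 = k - (n+1) := by omega
    rw [h1, h2]
    push_cast
    ring

lemma itd_sum (s : Finset ℕ) (c : ℕ → ℝ) (n : ℕ) :
    iteratedDeriv n (fun θ : ℝ => ∑ k ∈ s, c k * θ ^ k / (Nat.factorial k : ℝ)) =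
    fun θ => ∑ k ∈ s, c k * ((k.descFactorial n : ℝ) * θ ^ (k - n)) / (Nat.factorial k : ℝ) := by
  induction n with
  | zero => simp
  | succ n ih =>
    rw [iteratedDeriv_succ, ih]
    funext x
    rw [deriv_fun_sum]
    · refine Finset.sum_congr rfl fun k _ => ?_
      have he : (fun θ : ℝ => c k * ((k.descFactorial n : ℝ) * θ ^ (k - n)) / (Nat.factorial k : ℝ))
          = fun θ : ℝ => (c k * (k.descFactorial n : ℝ) / (Nat.factorial k : ℝ)) * θ ^ (k - n) := by
        funext θ; ring
      rw [he, deriv_const_mul_field, deriv_pow_field]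
      have h1 : k.descFactorial (n+1) = (k - n) * k.descFactorial n := Nat.descFactorial_succ k n
      have h2 : k - n - 1 = k - (n+1) := by omega
      rw [h1, h2]
      push_cast
      ring
    · intro k _
      have he : (fun θ : ℝ => c k * ((k.descFactorial n : ℝ) * θ ^ (k - n)) / (Nat.factorial k : ℝ))
          = fun θ : ℝ => (c k * (k.descFactorial n : ℝ) / (Nat.factorial k : ℝ)) * θ ^ (k - n) := by
        funext θ; ring
      rw [he]
      exact ((differentiable_pow _).const_mul _).differentiableAt

lemma itd_sum_zero (s : Finset ℕ) (c : ℕ → ℝ) (n : ℕ) :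
    iteratedDeriv n (fun θ : ℝ => ∑ k ∈ s, c k * θ ^ k / (Nat.factorial k : ℝ)) 0 =
      if n ∈ s then c n else 0 := by
  rw [itd_sum]
  dsimp only
  have hz : ∀ k ∈ s, k ≠ n →
      c k * ((k.descFactorial n : ℝ) * (0:ℝ) ^ (k - n)) / (Nat.factorial k : ℝ) = 0 := by
    intro k _ hk
    rcases lt_or_gt_of_ne hk with h | h
    · rw [Nat.descFactorial_eq_zero_iff_lt.mpr h]; simp
    · rw [zero_pow (by omega : k - n ≠ 0)]; simp
  by_cases h : n ∈ s
  · rw [if_pos h, Finset.sum_eq_single_of_mem n h hz, Nat.sub_self, pow_zero,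
      Nat.descFactorial_self, mul_one, mul_div_assoc, div_self, mul_one]
    exact Nat.cast_ne_zero.mpr n.factorial_ne_zero
  · rw [if_neg h, Finset.sum_eq_zero]
    intro k hk
    exact hz k hk (by rintro rfl; exact h hk)

/-- Model 'Form (I)' curve with missing degree `d'−1` (here with `Q ≡ 0`, `P ≡ 0`):
`γ(θ; v) = ∑_{j=1}^{d'-2} v_j θ^j/j! + (1 + v_{d'-1}) θ^{d'}/d'!
          + ∑_{j=d'+1}^{d} (σ_j + v_{j-1}) θ^j/j!`. -/
noncomputable def gammaI (d d' : ℕ) (σ : ℕ → ℝ) (v : ℕ → ℝ) (θ : ℝ) : ℝ :=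
  ∑ k ∈ Finset.Icc 1 d,
    (if k ≤ d' - 2 then v k
     else if k = d' - 1 then 0
     else if k = d' then 1 + v (d' - 1)
     else σ k + v (k - 1)) * θ ^ k / (Nat.factorial k : ℝ)

set_option maxHeartbeats 800000 in
/-- for `d ≥ 3` and `2 ≤ d' ≤ d`, the Form (I) model curve satisfies
the `(d−1)`-parameter cinematic curvature condition at the origin. -/
theorem stmt_12 (d d' : ℕ) (hd : 3 ≤ d) (h1 : 2 ≤ d') (h2 : d' ≤ d) (σ : ℕ → ℝ) :
    (Matrix.of fun i j : Fin d =>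
      if j.1 = 0 then
        deriv (fun t : ℝ => iteratedDeriv (i.1 + 1) (gammaI d d' σ (fun _ => 0)) t) 0
      else
        deriv (fun a : ℝ =>
            iteratedDeriv (i.1 + 1) (gammaI d d' σ (Function.update (fun _ => (0:ℝ)) j.1 a)) 0)
          0).det ≠ 0 := by
  set E : Matrix (Fin d) (Fin d) ℝ := Matrix.of (fun i j : Fin d =>
    if j.1 = 0 then
      (if i.1 + 2 = d' then (1:ℝ) else if d' + 1 ≤ i.1 + 2 ∧ i.1 + 2 ≤ d then σ (i.1 + 2) else 0)
    else
      (if i.1 + 1 ≤ d' - 2 then (if i.1 + 1 = j.1 then 1 else 0)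
       else if i.1 + 1 = d' - 1 then 0
       else if i.1 + 1 = d' then (if d' - 1 = j.1 then 1 else 0)
       else (if i.1 = j.1 then 1 else 0))) with hE
  have hgam : ∀ v : ℕ → ℝ, gammaI d d' σ v = fun θ : ℝ => ∑ k ∈ Finset.Icc 1 d,
      (if k ≤ d' - 2 then v k
       else if k = d' - 1 then 0
       else if k = d' then 1 + v (d' - 1)
       else σ k + v (k - 1)) * θ ^ k / (Nat.factorial k : ℝ) := fun v => rfl
  have key : (Matrix.of fun i j : Fin d =>
      if j.1 = 0 then
        deriv (fun t : ℝ => iteratedDeriv (i.1 + 1) (gammaI d d' σ (fun _ => 0)) t) 0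
      else
        deriv (fun a : ℝ =>
            iteratedDeriv (i.1 + 1) (gammaI d d' σ (Function.update (fun _ => (0:ℝ)) j.1 a)) 0)
          0) = E := by
    ext i j
    simp only [Matrix.of_apply, hE]
    by_cases hj : j.1 = 0
    · rw [if_pos hj, if_pos hj]
      have he : (fun t : ℝ => iteratedDeriv (i.1 + 1) (gammaI d d' σ (fun _ => 0)) t)
          = iteratedDeriv (i.1 + 1) (gammaI d d' σ (fun _ => 0)) := rfl
      rw [he, ← iteratedDeriv_succ, hgam, itd_sum_zero]
      simp only [Finset.mem_Icc]
      have hi := i.2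
      split_ifs <;> first | rfl | omega | norm_num
    · rw [if_neg hj, if_neg hj]
      have hf : (fun a : ℝ =>
          iteratedDeriv (i.1 + 1) (gammaI d d' σ (Function.update (fun _ => (0:ℝ)) j.1 a)) 0)
          = fun a : ℝ =>
            (if i.1 + 1 ≤ d' - 2 then (if i.1 + 1 = j.1 then a else 0)
             else if i.1 + 1 = d' - 1 then 0
             else if i.1 + 1 = d' then 1 + (if d' - 1 = j.1 then a else 0)
             else σ (i.1 + 1) + (if i.1 = j.1 then a else 0)) := by
        funext a
        rw [hgam, itd_sum_zero]
        have hmem : i.1 + 1 ∈ Finset.Icc 1 d := by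
          simp only [Finset.mem_Icc]; exact ⟨by omega, by have := i.2; omega⟩
        rw [if_pos hmem]
        have hstep : i.1 + 1 - 1 = i.1 := by omega
        simp only [Function.update_apply, hstep]
      rw [hf]
      have hi := i.2
      by_cases c1 : i.1 + 1 ≤ d' - 2
      · simp only [if_pos c1]
        by_cases c2 : i.1 + 1 = j.1
        · simp only [if_pos c2, deriv_id'']
        · simp only [if_neg c2, deriv_const']
      · simp only [if_neg c1]
        by_cases c3 : i.1 + 1 = d' - 1
        · simp only [if_pos c3, deriv_const']
        · simp only [if_neg c3]
          by_cases c4 : i.1 + 1 = d'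
          · simp only [if_pos c4]
            by_cases c5 : d' - 1 = j.1
            · simp only [if_pos c5]; rw [deriv_const_add]; exact deriv_id 0
            · simp only [if_neg c5, deriv_const']
          · simp only [if_neg c4]
            by_cases c6 : i.1 = j.1
            · simp only [if_pos c6]; rw [deriv_const_add]; exact deriv_id 0
            · simp only [if_neg c6, deriv_const']
  rw [key]
  let ρ : Equiv.Perm (Fin d) :=
    { toFun := fun j => ⟨if j.1 + 1 ≤ d' - 2 then j.1 + 1 else if j.1 = d' - 2 then 0 else j.1,
        by have hj := j.2; split_ifs <;> omega⟩
      invFun := fun i => ⟨if i.1 = 0 then d' - 2 else if i.1 ≤ d' - 2 then i.1 - 1 else i.1,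
        by have hi := i.2; split_ifs <;> omega⟩
      left_inv := by
        intro j; have hj := j.2; ext; dsimp only
        split_ifs <;> first | omega | (exfalso; simp_all)
      right_inv := by
        intro i; have hi := i.2; ext; dsimp only
        split_ifs <;> first | omega | (exfalso; simp_all) }
  have hρ : ∀ j : Fin d, (ρ j).1
      = if j.1 + 1 ≤ d' - 2 then j.1 + 1 else if j.1 = d' - 2 then 0 else j.1 := fun j => rfl
  have hEval : ∀ (i : Fin d) (m : ℕ), (ρ i).1 = m →
      ∀ x : ℝ, ((m = 0 → (if i.1 + 2 = d' then (1:ℝ)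
          else if d' + 1 ≤ i.1 + 2 ∧ i.1 + 2 ≤ d then σ (i.1 + 2) else 0) = x) ∧
        (m ≠ 0 → (if i.1 + 1 ≤ d' - 2 then (if i.1 + 1 = m then (1:ℝ) else 0)
          else if i.1 + 1 = d' - 1 then 0
          else if i.1 + 1 = d' then (if d' - 1 = m then 1 else 0)
          else (if i.1 = m then 1 else 0)) = x)) → True := fun _ _ _ _ _ => trivial
  have hent : ∀ (i j : Fin d), E i j
      = if j.1 = 0 then
          (if i.1 + 2 = d' then (1:ℝ)
           else if d' + 1 ≤ i.1 + 2 ∧ i.1 + 2 ≤ d then σ (i.1 + 2) else 0)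
        else
          (if i.1 + 1 ≤ d' - 2 then (if i.1 + 1 = j.1 then 1 else 0)
           else if i.1 + 1 = d' - 1 then 0
           else if i.1 + 1 = d' then (if d' - 1 = j.1 then 1 else 0)
           else (if i.1 = j.1 then 1 else 0)) := fun i j => rfl
  have htri : (E.submatrix id ρ).BlockTriangular OrderDual.toDual := by
    intro i j hij
    have hij2 : i.1 < j.1 := hij
    have hi := i.2; have hj := j.2
    rw [Matrix.submatrix_apply, id_eq, hent]
    by_cases a1 : j.1 + 1 ≤ d' - 2
    · have hv : (ρ j).1 = j.1 + 1 := by rw [hρ, if_pos a1]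
      rw [hv]
      split_ifs <;> first | rfl | omega | exact (‹False›).elim
    · by_cases a2 : j.1 = d' - 2
      · have hv : (ρ j).1 = 0 := by rw [hρ, if_neg a1, if_pos a2]
        rw [hv]
        split_ifs <;> first | rfl | omega | exact (‹False›).elim
      · have hv : (ρ j).1 = j.1 := by rw [hρ, if_neg a1, if_neg a2]
        rw [hv]
        split_ifs <;> first | rfl | omega | exact (‹False›).elim
  have hdiag : ∀ i : Fin d, (E.submatrix id ρ) i i = 1 := by
    intro i
    have hi := i.2
    rw [Matrix.submatrix_apply, id_eq, hent]
    by_cases a1 : i.1 + 1 ≤ d' - 2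
    · have hv : (ρ i).1 = i.1 + 1 := by rw [hρ, if_pos a1]
      rw [hv]
      split_ifs <;> first | rfl | omega | exact (‹False›).elim
    · by_cases a2 : i.1 = d' - 2
      · have hv : (ρ i).1 = 0 := by rw [hρ, if_neg a1, if_pos a2]
        rw [hv]
        split_ifs <;> first | rfl | omega | exact (‹False›).elim
      · have hv : (ρ i).1 = i.1 := by rw [hρ, if_neg a1, if_neg a2]
        rw [hv]
        split_ifs <;> first | rfl | omega | exact (‹False›).elim
  have hdet1 : (E.submatrix id ρ).det = 1 := by
    rw [Matrix.det_of_lowerTriangular _ htri]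
    exact Finset.prod_eq_one fun i _ => hdiag i
  have hperm := Matrix.det_permute' ρ E
  rw [hdet1] at hperm
  intro h
  rw [h, mul_zero] at hperm
  exact one_ne_zero hperm
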